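/- For any p ≥ 3, the quantity W_p := inf_{τ > 0} exp(τ/2^p)·Θ_p(τ) satisfies log₂ W_p < 2^{−p}·(p + log₂(3e)); consequently C_p := 1/(1 − log₂ W_p) satisfies C_p < 1/(1 − 2^{−p}(p + log₂(3e))). -/
import Mathlib


open Real BigOperators

set_option maxHeartbeats 1000000

/-- `Θ_p(τ) = ∑_{z ∈ ℤ} exp(-τ |z|^p)`. -/
noncomputable def Theta (p τ : ℝ) : ℝ :=
  ∑' z : ℤ, Real.exp (-τ * |(z : ℝ)| ^ p)

/-- `W_p := inf_{τ > 0} exp(τ/2^p) Θ_p(τ)`. -/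
noncomputable def Wp (p : ℝ) : ℝ :=
  ⨅ τ : Set.Ioi (0 : ℝ), Real.exp ((τ : ℝ) / 2 ^ p) * Theta p τ

lemma tail_ptwise (τ : ℝ) (hτ : 0 ≤ τ) (p : ℝ) (hp : 1 ≤ p) (n : ℕ) :
    Real.exp (-τ * |((n:ℝ)+1)| ^ p) ≤ Real.exp (-τ) ^ (n+1) := by
  have h1 : (1:ℝ) ≤ (n:ℝ)+1 := by have := Nat.cast_nonneg (α := ℝ) n; linarith
  have habs : |((n:ℝ)+1)| = (n:ℝ)+1 := abs_of_pos (by positivity)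
  have hpow : ((n:ℝ)+1) ≤ ((n:ℝ)+1) ^ p := by
    calc ((n:ℝ)+1) = ((n:ℝ)+1) ^ (1:ℝ) := (Real.rpow_one _).symm
    _ ≤ ((n:ℝ)+1) ^ p := Real.rpow_le_rpow_of_exponent_le h1 hp
  have : Real.exp (-τ) ^ (n+1) = Real.exp (-τ * ((n:ℝ)+1)) := by
    rw [← Real.exp_nat_mul]; push_cast; ring_nf
  rw [this, habs]
  apply Real.exp_le_exp.mpr
  nlinarith

lemma theta_bounds (p τ : ℝ) (hτ : 0 < τ) (hp : 1 ≤ p) :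
    1 ≤ Theta p τ ∧ Theta p τ ≤ 1 + 2 * (Real.exp (-τ) / (1 - Real.exp (-τ))) := by
  set r : ℝ := Real.exp (-τ) with hr
  have hr0 : 0 ≤ r := (Real.exp_pos _).le
  have hr1 : r < 1 := by
    rw [hr, Real.exp_lt_one_iff]; linarith
  set f : ℤ → ℝ := fun z => Real.exp (-τ * |(z:ℝ)| ^ p) with hf
  have hgsum : Summable (fun n : ℕ => r ^ (n+1)) := by
    have := (summable_geometric_of_lt_one hr0 hr1).mul_left r
    refine this.congr fun n => ?_
    rw [pow_succ, mul_comm]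
  have hgt : (∑' n : ℕ, r ^ (n+1)) = r / (1-r) := by
    have : (fun n : ℕ => r ^ (n+1)) = fun n : ℕ => r * r ^ n := by
      funext n; rw [pow_succ, mul_comm]
    rw [this, tsum_mul_left, tsum_geometric_of_lt_one hr0 hr1, div_eq_mul_inv]
  have hpos : ∀ n : ℕ, 0 ≤ f ((n:ℤ)+1) := fun n => (Real.exp_pos _).le
  have hb1 : ∀ n : ℕ, f ((n:ℤ)+1) ≤ r ^ (n+1) := by
    intro n
    have := tail_ptwise τ hτ.le p hp n
    simpa [hf] using this
  have hb2 : ∀ n : ℕ, f (-((n:ℤ)+1)) ≤ r ^ (n+1) := by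
    intro n
    have := tail_ptwise τ hτ.le p hp n
    simp only [hf]
    rw [show |((-((n:ℤ)+1) : ℤ) : ℝ)| = |((n:ℝ)+1)| by push_cast; rw [abs_neg]]
    simpa using this
  have hs1 : Summable (fun n : ℕ => f ((n:ℤ)+1)) :=
    Summable.of_nonneg_of_le hpos hb1 hgsum
  have hs2 : Summable (fun n : ℕ => f (-((n:ℤ)+1))) :=
    Summable.of_nonneg_of_le (fun n => (Real.exp_pos _).le) hb2 hgsum
  have hs1' : Summable (fun n : ℕ => f (((n:ℤ))+1)) := hs1
  have htsum : Theta p τ = (∑' n : ℕ, f ((n:ℤ)+1)) + f 0 + ∑' n : ℕ, f (-((n:ℤ)+1)) := by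
    rw [Theta]
    exact tsum_of_add_one_of_neg_add_one hs1 hs2
  have hf0 : f 0 = 1 := by
    simp [hf, Real.zero_rpow (by linarith : p ≠ 0)]
  have ht1 : (∑' n : ℕ, f ((n:ℤ)+1)) ≤ r / (1-r) := by
    rw [← hgt]; exact Summable.tsum_le_tsum hb1 hs1 hgsum
  have ht2 : (∑' n : ℕ, f (-((n:ℤ)+1))) ≤ r / (1-r) := by
    rw [← hgt]; exact Summable.tsum_le_tsum hb2 hs2 hgsum
  have hnn1 : 0 ≤ (∑' n : ℕ, f ((n:ℤ)+1)) := tsum_nonneg fun n => (Real.exp_pos _).le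
  have hnn2 : 0 ≤ (∑' n : ℕ, f (-((n:ℤ)+1))) := tsum_nonneg fun n => (Real.exp_pos _).le
  constructor
  · rw [htsum, hf0]; linarith
  · rw [htsum, hf0]; linarith

/-- For any `p ≥ 3`, `log₂ W_p < 2^{−p} (p + log₂(3e))`; consequently
`C_p := 1/(1 − log₂ W_p)` satisfies `C_p < 1/(1 − 2^{−p}(p + log₂(3e)))`. -/
theorem Cp_bound (p : ℝ) (hp : 3 ≤ p) :
    Real.logb 2 (Wp p) < 2 ^ (-p) * (p + Real.logb 2 (3 * Real.exp 1)) ∧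
    1 / (1 - Real.logb 2 (Wp p)) <
      1 / (1 - 2 ^ (-p) * (p + Real.logb 2 (3 * Real.exp 1))) := by
  have hp1 : (1:ℝ) ≤ p := by linarith
  have hl2 : 0 < Real.log 2 := Real.log_pos (by norm_num)
  have hl2lo : 0.6931471803 < Real.log 2 := Real.log_two_gt_d9
  have hl2hi : Real.log 2 < 0.6931471808 := Real.log_two_lt_d9
  have hl3 : 0 < Real.log 3 := Real.log_pos (by norm_num)
  have hl3hi : Real.log 3 < 2 * Real.log 2 := by
    have h4 : Real.log 3 < Real.log 4 := Real.log_lt_log (by norm_num) (by norm_num)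
    have : Real.log 4 = 2 * Real.log 2 := by
      rw [show (4:ℝ) = 2^(2:ℕ) by norm_num, Real.log_pow]; push_cast; ring
    linarith
  -- x = 2^{-p}
  set x : ℝ := (2:ℝ) ^ (-p) with hxdef
  have hx0 : 0 < x := Real.rpow_pos_of_pos (by norm_num) _
  have hxinv : x * (2:ℝ) ^ p = 1 := by
    rw [hxdef, ← Real.rpow_add (by norm_num)]; simp
  have h2p0 : (0:ℝ) < (2:ℝ) ^ p := Real.rpow_pos_of_pos (by norm_num) _
  have hxle : x ≤ 1/8 := by
    rw [hxdef]
    calc (2:ℝ) ^ (-p) ≤ (2:ℝ) ^ (-3 : ℝ) :=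
          Real.rpow_le_rpow_of_exponent_le (by norm_num) (by linarith)
    _ = 1/8 := by
        rw [show (-3:ℝ) = ((-3:ℤ):ℝ) by norm_num, Real.rpow_intCast]; norm_num
  -- choose τ₀
  set τ₀ : ℝ := p * Real.log 2 + Real.log 3 with hτ₀def
  have hτ₀ : 0 < τ₀ := by positivity
  have hr : Real.exp (-τ₀) = x / 3 := by
    have h1 : -τ₀ = Real.log 2 * (-p) + (-Real.log 3) := by rw [hτ₀def]; ring
    rw [h1, Real.exp_add, ← Real.rpow_def_of_pos (by norm_num : (0:ℝ) < 2),
      Real.exp_neg, Real.exp_log (by norm_num : (0:ℝ) < 3), hxdef]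
    ring
  obtain ⟨hΘ1, hΘle⟩ := theta_bounds p τ₀ hτ₀ hp1
  have hΘlt : Theta p τ₀ < 1 + x := by
    rw [hr] at hΘle
    have h13 : 0 < 1 - x/3 := by linarith
    have key : 2 * (x/3 / (1 - x/3)) < x := by
      rw [mul_div_assoc', div_lt_iff₀ h13]
      nlinarith
    linarith
  have hlogΘ : Real.log (Theta p τ₀) < x := by
    have := Real.log_le_sub_one_of_pos (by linarith : 0 < Theta p τ₀)
    linarith
  -- A = exp(τ₀/2^p) * Theta p τ₀
  set A : ℝ := Real.exp (τ₀ / 2 ^ p) * Theta p τ₀ with hAdef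
  have hτx : τ₀ / 2 ^ p = τ₀ * x := by
    field_simp
    nlinarith [hxinv]
  have hlogA : Real.log A < τ₀ * x + x := by
    rw [hAdef, Real.log_mul (Real.exp_ne_zero _) (by linarith), Real.log_exp, hτx]
    linarith
  -- W_p ≥ 1 and W_p ≤ A
  have hW1 : 1 ≤ Wp p := by
    rw [Wp]
    apply le_ciInf
    rintro ⟨τ, hτ⟩
    have hτ' : 0 < τ := hτ
    have h1 := (theta_bounds p τ hτ' hp1).1
    have h2 : 1 ≤ Real.exp (τ / 2 ^ p) := by
      rw [Real.one_le_exp_iff]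
      positivity
    nlinarith
  have hWA : Wp p ≤ A := by
    rw [Wp]
    have hbdd : BddBelow (Set.range fun τ : Set.Ioi (0:ℝ) =>
        Real.exp ((τ:ℝ) / 2 ^ p) * Theta p τ) := by
      refine ⟨0, ?_⟩
      rintro y ⟨τ, rfl⟩
      have := (theta_bounds p τ τ.2 hp1).1
      positivity
    exact ciInf_le hbdd ⟨τ₀, hτ₀⟩
  -- logb chain
  have hWpos : 0 < Wp p := by linarith
  have hlogbW : Real.logb 2 (Wp p) ≤ Real.logb 2 A :=
    Real.logb_le_logb_of_le (by norm_num) hWpos hWA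
  have hlogbA : Real.logb 2 A < x * (p + Real.logb 2 (3 * Real.exp 1)) := by
    have hRHS : Real.logb 2 (3 * Real.exp 1) = (Real.log 3 + 1) / Real.log 2 := by
      rw [Real.logb, Real.log_mul (by norm_num) (Real.exp_ne_zero _), Real.log_exp]
    rw [Real.logb, hRHS]
    rw [div_lt_iff₀ hl2]
    have : x * (p + (Real.log 3 + 1) / Real.log 2) * Real.log 2
        = τ₀ * x + x := by
      field_simp
      rw [hτ₀def]; ring
    rw [this]
    exact hlogA
  have part1 : Real.logb 2 (Wp p) < x * (p + Real.logb 2 (3 * Real.exp 1)) :=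
    lt_of_le_of_lt hlogbW hlogbA
  refine ⟨part1, ?_⟩
  -- RHS < 1
  have hc : Real.logb 2 (3 * Real.exp 1) < 3.45 := by
    have hRHS : Real.logb 2 (3 * Real.exp 1) = (Real.log 3 + 1) / Real.log 2 := by
      rw [Real.logb, Real.log_mul (by norm_num) (Real.exp_ne_zero _), Real.log_exp]
    rw [hRHS, div_lt_iff₀ hl2]
    have : (3.45:ℝ) * 0.6931471803 < 3.45 * Real.log 2 :=
      mul_lt_mul_of_pos_left hl2lo (by norm_num)
    nlinarith
  have h2pbig : p + 3.45 < (2:ℝ) ^ p := by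
    have he : (2:ℝ) ^ p = 8 * Real.exp (Real.log 2 * (p - 3)) := by
      rw [Real.rpow_def_of_pos (by norm_num : (0:ℝ) < 2)]
      rw [show Real.log 2 * p = 3 * Real.log 2 + Real.log 2 * (p-3) by ring, Real.exp_add]
      congr 1
      rw [show (3:ℝ) * Real.log 2 = Real.log (2^(3:ℕ)) by rw [Real.log_pow]; push_cast; ring]
      rw [Real.exp_log (by norm_num)]
      norm_num
    have hlin : 1 + Real.log 2 * (p - 3) ≤ Real.exp (Real.log 2 * (p - 3)) := by
      have := Real.add_one_le_exp (Real.log 2 * (p - 3))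
      linarith
    rw [he]
    have hm : 0.6931471803*(p-3) ≤ Real.log 2*(p-3) :=
      mul_le_mul_of_nonneg_right hl2lo.le (by linarith)
    have h8 : 8*(1 + Real.log 2*(p-3)) ≤ 8*Real.exp (Real.log 2*(p-3)) := by linarith
    have : p + 3.45 < 8*(1 + 0.6931471803*(p-3)) := by linarith
    linarith
  have hRHS1 : x * (p + Real.logb 2 (3 * Real.exp 1)) < 1 := by
    have hcpos : 0 < p + Real.logb 2 (3 * Real.exp 1) := by
      have : 0 < Real.logb 2 (3 * Real.exp 1) := by
        apply Real.logb_pos (by norm_num)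
        nlinarith [Real.exp_pos 1, Real.one_le_exp (by norm_num : (0:ℝ) ≤ 1)]
      linarith
    calc x * (p + Real.logb 2 (3 * Real.exp 1)) < x * (2:ℝ)^p := by
          apply mul_lt_mul_of_pos_left _ hx0
          linarith
    _ = 1 := hxinv
  have h1 : 0 < 1 - x * (p + Real.logb 2 (3 * Real.exp 1)) := by linarith
  have h2 : 1 - x * (p + Real.logb 2 (3 * Real.exp 1)) < 1 - Real.logb 2 (Wp p) := by
    linarith
  exact one_div_lt_one_div_of_lt h1 h2
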